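/- Let α ∈ (0,1), π_0 ∈ (0,1), and define the distribution function F(n) = Σ_{i=1}^n f_{i-1} where f_0 = 1 - ((1-π_0)/π_0)(1 - 2^{-α}) and f_i = ((1-π_0)/π_0)(i^{-α} - 2(i+1)^{-α} + (i+2)^{-α}) for i ≥ 1. Then 1 - F(n) ~ ((1-π_0)/π_0)·α·n^{-(1+α)} as n → ∞, in the sense that the ratio tends to 1. -/

import Mathlib

open Filter Real

/-- `1 - F(n) ~ ((1-π0)/π0) α n^{-(1+α)}` where `F n = Σ_{i<n} f i`. -/
theorem stmt8 (α π0 : ℝ) (hα : α ∈ Set.Ioo (0:ℝ) 1) (hπ0 : π0 ∈ Set.Ioo (0:ℝ) 1)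
    (hvalid : ((2 : ℝ) ^ α - 1) / ((2 : ℝ) ^ (α + 1) - 1) < π0)
    (f : ℕ → ℝ)
    (hf0 : f 0 = 1 - ((1 - π0) / π0) * (1 - (2 : ℝ) ^ (-α)))
    (hf : ∀ i : ℕ, 1 ≤ i → f i = ((1 - π0) / π0) *
      ((i : ℝ) ^ (-α) - 2 * ((i : ℝ) + 1) ^ (-α) + ((i : ℝ) + 2) ^ (-α))) :
    Filter.Tendsto
      (fun n : ℕ => (1 - ∑ i ∈ Finset.range n, f i) /
        (((1 - π0) / π0) * α * (n : ℝ) ^ (-(1 + α))))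
      Filter.atTop (nhds 1) := by
  obtain ⟨hα0, hα1⟩ := hα
  obtain ⟨hπ00, hπ01⟩ := hπ0
  set c : ℝ := (1 - π0) / π0 with hc
  have hcpos : 0 < c := div_pos (by linarith) hπ00
  -- telescoping sum formula
  have hsum : ∀ n : ℕ, 1 ≤ n →
      ∑ i ∈ Finset.range n, f i = 1 - c * ((n:ℝ) ^ (-α) - ((n:ℝ)+1) ^ (-α)) := by
    intro n hn
    induction n with
    | zero => omega
    | succ m ih =>
      rcases Nat.lt_or_ge m 1 with h1 | h1
      · have hm : m = 0 := by omega
        subst hm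
        norm_num [Finset.sum_range_succ, Finset.sum_range_zero, hf0, Real.one_rpow]
      · rw [Finset.sum_range_succ, ih h1, hf m h1]
        push_cast
        have h2 : ((m:ℝ)+1)+1 = (m:ℝ)+2 := by ring
        rw [h2]
        ring
  -- derivative fact
  have hd : HasDerivAt (fun x : ℝ => (1 + x) ^ (-α)) (-α) 0 := by
    have h1 : HasDerivAt (fun x : ℝ => 1 + x) 1 0 := by
      simpa using (hasDerivAt_id (0:ℝ)).const_add 1
    have h2 : HasDerivAt (fun y : ℝ => y ^ (-α)) (-α * (1:ℝ) ^ (-α - 1)) 1 :=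
      Real.hasDerivAt_rpow_const (Or.inl one_ne_zero)
    have h2' : HasDerivAt (fun y : ℝ => y ^ (-α)) (-α * (1:ℝ) ^ (-α - 1))
        ((fun x : ℝ => 1 + x) 0) := by simpa using h2
    have h3 := h2'.comp (0:ℝ) h1
    simp only [Real.one_rpow, mul_one] at h3
    exact h3
  have hslope : Tendsto (fun x : ℝ => (1 - (1+x) ^ (-α)) / x)
      (nhdsWithin 0 {(0:ℝ)}ᶜ) (nhds α) := by
    have h0 := (hasDerivAt_iff_tendsto_slope.mp hd).neg
    have h1 : Tendsto (fun x : ℝ => -(slope (fun x : ℝ => (1 + x) ^ (-α)) 0 x))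
        (nhdsWithin 0 {(0:ℝ)}ᶜ) (nhds α) := by simpa using h0
    refine h1.congr (fun x => ?_)
    rw [slope_def_field]
    norm_num [Real.one_rpow]
    ring
  have hcomp : Tendsto (fun n : ℕ => (1/(n:ℝ))) atTop (nhdsWithin 0 {(0:ℝ)}ᶜ) := by
    rw [tendsto_nhdsWithin_iff]
    refine ⟨tendsto_one_div_atTop_nhds_zero_nat, ?_⟩
    filter_upwards [eventually_ge_atTop 1] with n hn
    have : (0:ℝ) < n := by exact_mod_cast hn
    simp [Set.mem_compl_iff, ne_of_gt this]
  have hmain : Tendsto (fun n : ℕ => (1 - (1+1/(n:ℝ)) ^ (-α)) / (1/(n:ℝ)))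
      atTop (nhds α) := hslope.comp hcomp
  have hαne : α ≠ 0 := ne_of_gt hα0
  have hdiv : Tendsto (fun n : ℕ => ((1 - (1+1/(n:ℝ)) ^ (-α)) / (1/(n:ℝ))) / α)
      atTop (nhds 1) := by
    have := hmain.div_const α
    simpa [div_self hαne] using this
  refine hdiv.congr' ?_
  filter_upwards [eventually_ge_atTop 1] with n hn
  have hN : (0:ℝ) < (n:ℝ) := by exact_mod_cast hn
  have hNne : (n:ℝ) ≠ 0 := ne_of_gt hN
  rw [hsum n hn]
  have hA : (0:ℝ) < (n:ℝ) ^ (-α) := Real.rpow_pos_of_pos hN _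
  have hB : (0:ℝ) < ((n:ℝ)+1) ^ (-α) := Real.rpow_pos_of_pos (by linarith) _
  have h1 : (1 + 1/(n:ℝ)) = ((n:ℝ)+1)/(n:ℝ) := by field_simp
  have h2 : (((n:ℝ)+1)/(n:ℝ)) ^ (-α) = ((n:ℝ)+1) ^ (-α) / (n:ℝ) ^ (-α) := by
    rw [Real.div_rpow (by linarith : (0:ℝ) ≤ (n:ℝ)+1) hN.le]
  have h3 : (n:ℝ) ^ (-(1+α)) = ((n:ℝ))⁻¹ * (n:ℝ) ^ (-α) := by
    rw [show -(1+α) = (-1) + (-α) by ring, Real.rpow_add hN, Real.rpow_neg_one]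
  rw [h1, h2, h3]
  field_simp
  ring
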